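/- Let B ∈ ℕ and let M be an ∃B-bounded MSC over P and Σ. Then the reflexive closure ⪯_B of ≺_B contains the partial order ≤_B (in particular it contains the happened-before order ≤), and ⪯_B is a B-bounded linearization of M. -/

import Mathlib

set_option maxHeartbeats 1000000

/-! ## Message sequence charts -/

/-- A message sequence chart (MSC) over processes `P` and labels `Lab`.
Events are natural numbers; `E` is the finite nonempty set of events. -/
structure MSC (P : Type) (Lab : Type) where
  /-- the finite set of events -/
  E : Finset ℕ
  nonemptyE : E.Nonempty
  /-- process edges `→` (direct successor on a process) -/
  proc : ℕ → ℕ → Prop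
  /-- message edges `◁` -/
  msg : ℕ → ℕ → Prop
  /-- location (process) of each event -/
  loc : ℕ → P
  /-- label of each event -/
  lab : ℕ → Lab
  proc_mem : ∀ e f, proc e f → e ∈ E ∧ f ∈ E
  msg_mem : ∀ e f, msg e f → e ∈ E ∧ f ∈ E
  proc_loc : ∀ e f, proc e f → loc e = loc f
  msg_loc : ∀ e f, msg e f → loc e ≠ loc f
  /-- on each process, any two events are comparable w.r.t. `→⁺` -/
  proc_total : ∀ e f, e ∈ E → f ∈ E → loc e = loc f →
    e = f ∨ Relation.TransGen proc e f ∨ Relation.TransGen proc f e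
  /-- `→` is the direct-successor (covering) relation of the order `→⁺` -/
  proc_cover : ∀ e f, proc e f →
    ¬ ∃ g, Relation.TransGen proc e g ∧ Relation.TransGen proc g f
  /-- every event belongs to at most one message edge -/
  msg_once : ∀ e f e' f', msg e f → msg e' f' →
    (e = e' ∨ e = f' ∨ f = e' ∨ f = f') → e = e' ∧ f = f'
  /-- FIFO condition -/
  fifo : ∀ e f e' f', msg e f → msg e' f' → loc e = loc e' → loc f = loc f' →
    (Relation.ReflTransGen proc e e' ↔ Relation.ReflTransGen proc f f')
  /-- `→ ∪ ◁` is acyclic -/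
  acyclic : ∀ e, ¬ Relation.TransGen (fun a b => proc a b ∨ msg a b) e e

namespace MSC

variable {P Lab : Type}

/-- `≤proc`, the reflexive transitive closure of `→`. -/
def procLe (M : MSC P Lab) : ℕ → ℕ → Prop := Relation.ReflTransGen M.proc

/-- `<proc`, the transitive closure of `→`. -/
def procLt (M : MSC P Lab) : ℕ → ℕ → Prop := Relation.TransGen M.proc

/-- the happened-before relation `≤ = (→ ∪ ◁)*`. -/
def hb (M : MSC P Lab) : ℕ → ℕ → Prop :=
  Relation.ReflTransGen (fun a b => M.proc a b ∨ M.msg a b)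

/-- Relabelling an MSC (same events and edges, new labelling). -/
def relabel {Γ : Type} (M : MSC P Lab) (γ : ℕ → Γ) : MSC P Γ where
  E := M.E
  nonemptyE := M.nonemptyE
  proc := M.proc
  msg := M.msg
  loc := M.loc
  lab := γ
  proc_mem := M.proc_mem
  msg_mem := M.msg_mem
  proc_loc := M.proc_loc
  msg_loc := M.msg_loc
  proc_total := M.proc_total
  proc_cover := M.proc_cover
  msg_once := M.msg_once
  fifo := M.fifo
  acyclic := M.acyclic

end MSC

/-! ## Star-free PDL -/

mutual
/-- Event formulas of star-free PDL. -/
inductive EF (P Lab : Type) : Type where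
  | proc : P → EF P Lab
  | lab : Lab → EF P Lab
  | or : EF P Lab → EF P Lab → EF P Lab
  | not : EF P Lab → EF P Lab
  | dia : PF P Lab → EF P Lab → EF P Lab
  | loop : PF P Lab → EF P Lab
/-- Path formulas of star-free PDL. -/
inductive PF (P Lab : Type) : Type where
  | next : PF P Lab
  | prev : PF P Lab
  | msg : P → P → PF P Lab
  | msgInv : P → P → PF P Lab
  | nextG : EF P Lab → PF P Lab
  | prevG : EF P Lab → PF P Lab
  | jump : P → P → PF P Lab
  | test : EF P Lab → PF P Lab
  | comp : PF P Lab → PF P Lab → PF P Lab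
  | union : PF P Lab → PF P Lab → PF P Lab
  | inter : PF P Lab → PF P Lab → PF P Lab
  | compl : PF P Lab → PF P Lab
end

mutual
/-- Satisfaction of event formulas at an event. -/
def EF.sat {P Lab : Type} (M : MSC P Lab) : EF P Lab → ℕ → Prop
  | .proc p, e => e ∈ M.E ∧ M.loc e = p
  | .lab a, e => e ∈ M.E ∧ M.lab e = a
  | .or φ ψ, e => EF.sat M φ e ∨ EF.sat M ψ e
  | .not φ, e => e ∈ M.E ∧ ¬ EF.sat M φ e
  | .dia π φ, e => ∃ f, PF.sem M π e f ∧ EF.sat M φ f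
  | .loop π, e => PF.sem M π e e
/-- Semantics of path formulas as binary relations on events. -/
def PF.sem {P Lab : Type} (M : MSC P Lab) : PF P Lab → ℕ → ℕ → Prop
  | .next, e, f => M.proc e f
  | .prev, e, f => M.proc f e
  | .msg p q, e, f => M.msg e f ∧ M.loc e = p ∧ M.loc f = q
  | .msgInv p q, e, f => M.msg f e ∧ M.loc f = p ∧ M.loc e = q
  | .nextG φ, e, f => M.procLt e f ∧ ∀ g, M.procLt e g → M.procLt g f → EF.sat M φ g
  | .prevG φ, e, f => M.procLt f e ∧ ∀ g, M.procLt f g → M.procLt g e → EF.sat M φ g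
  | .jump p r, e, f => e ∈ M.E ∧ f ∈ M.E ∧ M.loc e = p ∧ M.loc f = r
  | .test φ, e, f => e = f ∧ EF.sat M φ e
  | .comp π₁ π₂, e, f => ∃ g, PF.sem M π₁ e g ∧ PF.sem M π₂ g f
  | .union π₁ π₂, e, f => PF.sem M π₁ e f ∨ PF.sem M π₂ e f
  | .inter π₁ π₂, e, f => PF.sem M π₁ e f ∧ PF.sem M π₂ e f
  | .compl π, e, f => e ∈ M.E ∧ f ∈ M.E ∧ ¬ PF.sem M π e f
end

/-- Sentences of star-free PDL. -/
inductive PDLS (P Lab : Type) : Type where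
  | ex : EF P Lab → PDLS P Lab
  | or : PDLS P Lab → PDLS P Lab → PDLS P Lab
  | not : PDLS P Lab → PDLS P Lab

/-- Satisfaction of PDL sentences. -/
def PDLS.sat {P Lab : Type} (M : MSC P Lab) : PDLS P Lab → Prop
  | .ex φ => ∃ e ∈ M.E, EF.sat M φ e
  | .or ξ ζ => PDLS.sat M ξ ∨ PDLS.sat M ζ
  | .not ξ => ¬ PDLS.sat M ξ

/-- The four optional operators of star-free PDL. -/
inductive PDLOp : Type where
  | loop | union | inter | compl
deriving DecidableEq

mutual
/-- `EF.inFrag R φ` : the event formula `φ` belongs to the fragment `PDLsf[R]`. -/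
def EF.inFrag {P Lab : Type} (R : Set PDLOp) : EF P Lab → Prop
  | .proc _ => True
  | .lab _ => True
  | .or φ ψ => EF.inFrag R φ ∧ EF.inFrag R ψ
  | .not φ => EF.inFrag R φ
  | .dia π φ => PF.inFrag R π ∧ EF.inFrag R φ
  | .loop π => PDLOp.loop ∈ R ∧ PF.inFrag R π
/-- `PF.inFrag R π` : the path formula `π` belongs to the fragment `PDLsf[R]`. -/
def PF.inFrag {P Lab : Type} (R : Set PDLOp) : PF P Lab → Prop
  | .next => True
  | .prev => True
  | .msg _ _ => True
  | .msgInv _ _ => True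
  | .nextG φ => EF.inFrag R φ
  | .prevG φ => EF.inFrag R φ
  | .jump _ _ => True
  | .test φ => EF.inFrag R φ
  | .comp π₁ π₂ => PF.inFrag R π₁ ∧ PF.inFrag R π₂
  | .union π₁ π₂ => PDLOp.union ∈ R ∧ PF.inFrag R π₁ ∧ PF.inFrag R π₂
  | .inter π₁ π₂ => PDLOp.inter ∈ R ∧ PF.inFrag R π₁ ∧ PF.inFrag R π₂
  | .compl π => PDLOp.compl ∈ R ∧ PF.inFrag R π
end

/-- `PDLS.inFrag R ξ` : the sentence `ξ` belongs to the fragment `PDLsf[R]`. -/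
def PDLS.inFrag {P Lab : Type} (R : Set PDLOp) : PDLS P Lab → Prop
  | .ex φ => EF.inFrag R φ
  | .or ξ ζ => PDLS.inFrag R ξ ∧ PDLS.inFrag R ζ
  | .not ξ => PDLS.inFrag R ξ

/-- Conjunction of event formulas (derived operator). -/
def EF.and {P Lab : Type} (φ ψ : EF P Lab) : EF P Lab :=
  .not (.or (.not φ) (.not ψ))

/-- `isMinOf M π e m` : `m` is the `≤proc`-least element of `⟦π⟧_M(e)`
(in particular `⟦π⟧_M(e)` is nonempty). -/
def isMinOf {P Lab : Type} (M : MSC P Lab) (π : PF P Lab) (e m : ℕ) : Prop :=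
  PF.sem M π e m ∧ ∀ f, PF.sem M π e f → M.procLe m f

/-- `isMaxOf M π e m` : `m` is the `≤proc`-greatest element of `⟦π⟧_M(e)`
(in particular `⟦π⟧_M(e)` is nonempty). -/
def isMaxOf {P Lab : Type} (M : MSC P Lab) (π : PF P Lab) (e m : ℕ) : Prop :=
  PF.sem M π e m ∧ ∀ f, PF.sem M π e f → M.procLe f m

/-! ## MSO/FO logic over MSCs -/

/-- Formulas of MSO over MSCs: first-order kernel with atoms `p(x)`, `a(x)`,
`x = y`, `x → y`, `x ◁ y`, `x ≤ y` and additionally `x ∈ X_k` (monadic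
second-order variables, used for the EMSO prefix). -/
inductive FOS (P Lab : Type) : Type where
  | pred : P → ℕ → FOS P Lab
  | lab : Lab → ℕ → FOS P Lab
  | eq : ℕ → ℕ → FOS P Lab
  | edge : ℕ → ℕ → FOS P Lab
  | medge : ℕ → ℕ → FOS P Lab
  | le : ℕ → ℕ → FOS P Lab
  | inSet : ℕ → ℕ → FOS P Lab
  | or : FOS P Lab → FOS P Lab → FOS P Lab
  | not : FOS P Lab → FOS P Lab
  | ex : ℕ → FOS P Lab → FOS P Lab

/-- Satisfaction, with a first-order valuation `ν` and a second-order valuation `σ`.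
First-order quantification ranges over the events of the MSC. -/
def FOS.sat {P Lab : Type} (M : MSC P Lab) : FOS P Lab → (ℕ → ℕ) → (ℕ → Set ℕ) → Prop
  | .pred p x, ν, _ => M.loc (ν x) = p
  | .lab a x, ν, _ => M.lab (ν x) = a
  | .eq x y, ν, _ => ν x = ν y
  | .edge x y, ν, _ => M.proc (ν x) (ν y)
  | .medge x y, ν, _ => M.msg (ν x) (ν y)
  | .le x y, ν, _ => M.hb (ν x) (ν y)
  | .inSet x k, ν, σ => ν x ∈ σ k
  | .or Φ Ψ, ν, σ => FOS.sat M Φ ν σ ∨ FOS.sat M Ψ ν σ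
  | .not Φ, ν, σ => ¬ FOS.sat M Φ ν σ
  | .ex x Φ, ν, σ => ∃ e ∈ M.E, FOS.sat M Φ (Function.update ν x e) σ

/-- Free first-order variables. -/
def FOS.free {P Lab : Type} : FOS P Lab → Finset ℕ
  | .pred _ x => {x}
  | .lab _ x => {x}
  | .eq x y => {x, y}
  | .edge x y => {x, y}
  | .medge x y => {x, y}
  | .le x y => {x, y}
  | .inSet x _ => {x}
  | .or Φ Ψ => FOS.free Φ ∪ FOS.free Ψ
  | .not Φ => FOS.free Φ
  | .ex x Φ => (FOS.free Φ).erase x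

/-- All first-order variables occurring (free or bound). -/
def FOS.vars {P Lab : Type} : FOS P Lab → Finset ℕ
  | .pred _ x => {x}
  | .lab _ x => {x}
  | .eq x y => {x, y}
  | .edge x y => {x, y}
  | .medge x y => {x, y}
  | .le x y => {x, y}
  | .inSet x _ => {x}
  | .or Φ Ψ => FOS.vars Φ ∪ FOS.vars Ψ
  | .not Φ => FOS.vars Φ
  | .ex x Φ => insert x (FOS.vars Φ)

/-- A formula is first-order (`FO[→,◁,≤]`) iff it contains no set atoms. -/
def FOS.noSets {P Lab : Type} : FOS P Lab → Prop
  | .pred _ _ => True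
  | .lab _ _ => True
  | .eq _ _ => True
  | .edge _ _ => True
  | .medge _ _ => True
  | .le _ _ => True
  | .inSet _ _ => False
  | .or Φ Ψ => FOS.noSets Φ ∧ FOS.noSets Ψ
  | .not Φ => FOS.noSets Φ
  | .ex _ Φ => FOS.noSets Φ

/-! ## Communicating finite-state machines -/

/-- Actions of a process: internal `⟨a⟩`, send `!(a,m,q)`, receive `?(a,m,q)`. -/
inductive CAct (P Lab Msg : Type) : Type where
  | int : Lab → CAct P Lab Msg
  | snd : Lab → Msg → P → CAct P Lab Msg
  | rcv : Lab → Msg → P → CAct P Lab Msg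

/-- The label performed by an action. -/
def CAct.label {P Lab Msg : Type} : CAct P Lab Msg → Lab
  | .int a => a
  | .snd a _ _ => a
  | .rcv a _ _ => a

/-- A communicating finite-state machine over `P` and `Lab`. -/
structure CFM (P Lab : Type) where
  /-- states -/
  S : Type
  finS : Fintype S
  /-- messages -/
  Msg : Type
  finMsg : Fintype Msg
  /-- initial state of each process -/
  ι : P → S
  /-- transition relation of each process -/
  Δ : P → S → CAct P Lab Msg → S → Prop
  Δ_snd : ∀ p s a m q s', Δ p s (.snd a m q) s' → q ≠ p
  Δ_rcv : ∀ p s a m q s', Δ p s (.rcv a m q) s' → q ≠ p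
  /-- acceptance condition -/
  Acc : (P → S) → Prop

/-- Existence of an accepting run of a CFM on an MSC. -/
def CFM.Accepts {P Lab : Type} (A : CFM P Lab) (M : MSC P Lab) : Prop :=
  ∃ (src tgt : ℕ → A.S) (act : ℕ → CAct P Lab A.Msg),
    (∀ e ∈ M.E, A.Δ (M.loc e) (src e) (act e) (tgt e)) ∧
    (∀ e ∈ M.E, (act e).label = M.lab e) ∧
    (∀ e ∈ M.E, (¬ ∃ f, M.proc f e) → src e = A.ι (M.loc e)) ∧
    (∀ e f, M.proc e f → tgt e = src f) ∧
    (∀ e ∈ M.E, (¬ ∃ f, M.msg e f) → (¬ ∃ f, M.msg f e) → ∃ a, act e = .int a) ∧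
    (∀ e f, M.msg e f →
      ∃ a a' m, act e = .snd a m (M.loc f) ∧ act f = .rcv a' m (M.loc e)) ∧
    (∃ fin : P → A.S,
      (∀ p, (∀ e ∈ M.E, M.loc e ≠ p) → fin p = A.ι p) ∧
      (∀ e ∈ M.E, (¬ ∃ f, M.proc e f) → fin (M.loc e) = tgt e) ∧
      A.Acc fin)

/-- The language of a CFM. -/
def CFM.lang {P Lab : Type} (A : CFM P Lab) : Set (MSC P Lab) := {M | A.Accepts M}

/-! ## Letter-to-letter MSC transducers -/

/-- The relation accepted by a letter-to-letter MSC transducer from `Lab` to `Γ`,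
i.e., a CFM over `P` and `Lab × Γ`. -/
def Ltrans {P Lab Γ : Type} (A : CFM P (Lab × Γ)) (M : MSC P Lab) (N : MSC P Γ) : Prop :=
  ∃ γ : ℕ → Γ, N = M.relabel γ ∧ A.Accepts (M.relabel fun e => (M.lab e, γ e))

/-- `M_φ` : the MSC over `Bool` obtained from `M` by labelling each event with
the truth value of the event formula `φ`. -/
noncomputable def MSC.evalEF {P Lab : Type} (M : MSC P Lab) (φ : EF P Lab) : MSC P Bool :=
  M.relabel fun e => @ite Bool (EF.sat M φ e) (Classical.propDecidable _) true false

/-! ## Boolean combinations -/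

/-- Boolean combinations over atoms of type `α`. -/
inductive BC (α : Type) : Type where
  | atom : α → BC α
  | or : BC α → BC α → BC α
  | not : BC α → BC α

/-- Evaluation of a boolean combination given truth values of the atoms. -/
def BC.eval {α : Type} (v : α → Prop) : BC α → Prop
  | .atom a => v a
  | .or b c => BC.eval v b ∨ BC.eval v c
  | .not b => ¬ BC.eval v b

/-- The atoms occurring in a boolean combination. -/
def BC.atoms {α : Type} : BC α → Set α
  | .atom a => {a}
  | .or b c => BC.atoms b ∪ BC.atoms c
  | .not b => BC.atoms b

/-! ## Bounded MSCs -/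

/-- `r` is a linearization of `M`: a total order on the events containing
the happened-before relation. -/
def IsLinearization {P Lab : Type} (M : MSC P Lab) (r : ℕ → ℕ → Prop) : Prop :=
  (∀ e ∈ M.E, r e e) ∧
  (∀ e ∈ M.E, ∀ f ∈ M.E, r e f → r f e → e = f) ∧
  (∀ e ∈ M.E, ∀ f ∈ M.E, ∀ g ∈ M.E, r e f → r f g → r e g) ∧
  (∀ e ∈ M.E, ∀ f ∈ M.E, r e f ∨ r f e) ∧
  (∀ e ∈ M.E, ∀ f ∈ M.E, M.hb e f → r e f)

/-- `r` is a `B`-bounded linearization of `M`: at any point, each channel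
contains at most `B` pending messages. -/
def IsBBoundedLin {P Lab : Type} (M : MSC P Lab) (r : ℕ → ℕ → Prop) (B : ℕ) : Prop :=
  IsLinearization M r ∧
  ∀ g ∈ M.E, ∀ p q : P, p ≠ q →
    Set.ncard {ef : ℕ × ℕ | M.msg ef.1 ef.2 ∧ M.loc ef.1 = p ∧ M.loc ef.2 = q ∧
      r ef.1 g ∧ ¬ r ef.2 g} ≤ B

/-- `M` is `∃B`-bounded: some linearization of `M` is `B`-bounded. -/
def ExistsBBounded {P Lab : Type} (M : MSC P Lab) (B : ℕ) : Prop :=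
  ∃ r : ℕ → ℕ → Prop, IsBBoundedLin M r B

/-- `g` is a send event on channel `(p,q)`. -/
def isSendOn {P Lab : Type} (M : MSC P Lab) (p q : P) (g : ℕ) : Prop :=
  M.loc g = p ∧ ∃ h, M.msg g h ∧ M.loc h = q

/-- `revB M B f g` : `f` is a receive event with matching send `e` on some
channel `(p,q)`, and `g` is the `B`-th send on channel `(p,q)` strictly after `e`. -/
def revB {P Lab : Type} (M : MSC P Lab) (B : ℕ) (f g : ℕ) : Prop :=
  ∃ e, M.msg e f ∧ isSendOn M (M.loc e) (M.loc f) g ∧ M.procLt e g ∧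
    Set.ncard {g' | isSendOn M (M.loc e) (M.loc f) g' ∧ M.procLt e g' ∧ M.procLe g' g} = B

/-- `≤_B = (≤ ∪ rev_B)*`. -/
def leB {P Lab : Type} (M : MSC P Lab) (B : ℕ) : ℕ → ℕ → Prop :=
  Relation.ReflTransGen (fun a b => (M.proc a b ∨ M.msg a b) ∨ revB M B a b)

/-- `<_B`, the strict part of `≤_B`. -/
def ltB {P Lab : Type} (M : MSC P Lab) (B : ℕ) (e f : ℕ) : Prop :=
  leB M B e f ∧ ¬ leB M B f e

/-- `e ∥_B f` : incomparable w.r.t. `≤_B`. -/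
def parB {P Lab : Type} (M : MSC P Lab) (B : ℕ) (e f : ℕ) : Prop :=
  ¬ leB M B e f ∧ ¬ leB M B f e

/-- `↑_B e = {g : e ≤_B g}`. -/
def upB {P Lab : Type} (M : MSC P Lab) (B : ℕ) (e : ℕ) : Set ℕ :=
  {g | leB M B e g}

/-- The order `≺_B` (w.r.t. a fixed total order on `P`): `e ≺_B f` iff `e <_B f`, or
`e ∥_B f` and the `⊑`-minimum of `loc(↑_B e \ ↑_B f)` is strictly below the
`⊑`-minimum of `loc(↑_B f \ ↑_B e)`. -/
def precB {P Lab : Type} [LinearOrder P] (M : MSC P Lab) (B : ℕ) (e f : ℕ) : Prop :=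
  ltB M B e f ∨
    (parB M B e f ∧ ∃ p ∈ M.loc '' (upB M B e \ upB M B f),
      ∀ q ∈ M.loc '' (upB M B f \ upB M B e), p < q)

section Aux
open Relation
variable {P Lab : Type}

lemma step_mem (M : MSC P Lab) (B : ℕ) {a b : ℕ}
    (h : (M.proc a b ∨ M.msg a b) ∨ revB M B a b) : a ∈ M.E ∧ b ∈ M.E := by
  rcases h with (h | h) | h
  · exact M.proc_mem _ _ h
  · exact M.msg_mem _ _ h
  · obtain ⟨e, he, ⟨_, h', hm, _⟩, _⟩ := h
    exact ⟨(M.msg_mem _ _ he).2, (M.msg_mem _ _ hm).1⟩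

lemma hb_leB {M : MSC P Lab} {B : ℕ} {e f : ℕ} (h : M.hb e f) : leB M B e f :=
  ReflTransGen.mono (fun _ _ h => Or.inl h) _ _ h

lemma procLe_leB {M : MSC P Lab} {B : ℕ} {e f : ℕ} (h : M.procLe e f) : leB M B e f :=
  ReflTransGen.mono (fun _ _ h => Or.inl (Or.inl h)) _ _ h

lemma leB_mem_right {M : MSC P Lab} {B : ℕ} {e f : ℕ} (h : leB M B e f) :
    e = f ∨ f ∈ M.E := by
  induction h with
  | refl => exact Or.inl rfl
  | tail _ h2 _ => exact Or.inr (step_mem M B h2).2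

lemma leB_mem_left {M : MSC P Lab} {B : ℕ} {e f : ℕ} (h : leB M B e f) :
    e = f ∨ e ∈ M.E := by
  induction h using Relation.ReflTransGen.head_induction_on with
  | refl => exact Or.inl rfl
  | head h2 _ _ => exact Or.inr (step_mem M B h2).1

lemma procLt_irrefl {M : MSC P Lab} {e : ℕ} (h : M.procLt e e) : False :=
  M.acyclic e (TransGen.mono (fun _ _ h => Or.inl h) _ _ h)

lemma procLe_antisymm {M : MSC P Lab} {e f : ℕ} (h : M.procLe e f) (h' : M.procLe f e) :
    e = f := by
  by_contra hne
  rcases (Relation.reflTransGen_iff_eq_or_transGen.mp h) with h1 | h1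
  · exact hne h1.symm
  rcases (Relation.reflTransGen_iff_eq_or_transGen.mp h') with h2 | h2
  · exact hne h2
  exact procLt_irrefl (h1.trans h2)

lemma procLe_of_ne {M : MSC P Lab} {e f : ℕ} (h : M.procLe e f) (hne : e ≠ f) :
    M.procLt e f := by
  rcases Relation.reflTransGen_iff_eq_or_transGen.mp h with h1 | h1
  · exact absurd h1.symm hne
  · exact h1

lemma procLt_leB {M : MSC P Lab} {B : ℕ} {e f : ℕ} (h : M.procLt e f) : leB M B e f :=
  procLe_leB h.to_reflTransGen

lemma leB_comparable {M : MSC P Lab} {B : ℕ} {e f : ℕ} (he : e ∈ M.E) (hf : f ∈ M.E)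
    (hl : M.loc e = M.loc f) : leB M B e f ∨ leB M B f e := by
  rcases M.proc_total e f he hf hl with h | h | h
  · exact Or.inl (h ▸ ReflTransGen.refl)
  · exact Or.inl (procLt_leB h)
  · exact Or.inr (procLt_leB h)

end Aux
section Aux2
open Relation Classical
variable {P Lab : Type}

/-- rank of an event within its process -/
noncomputable def rank (M : MSC P Lab) (x : ℕ) : ℕ :=
  (M.E.filter (fun y => M.procLe y x)).card

lemma procLt_mem {M : MSC P Lab} {e f : ℕ} (h : M.procLt e f) : e ∈ M.E ∧ f ∈ M.E := by
  induction h with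
  | single h1 => exact M.proc_mem _ _ h1
  | tail _ h1 ih => exact ⟨ih.1, (M.proc_mem _ _ h1).2⟩

lemma rank_lt_rank {M : MSC P Lab} {x y : ℕ} (h : M.procLt x y) :
    rank M x < rank M y := by
  classical
  apply Finset.card_lt_card
  constructor
  · intro z hz
    simp only [Finset.mem_filter] at hz ⊢
    exact ⟨hz.1, hz.2.trans h.to_reflTransGen⟩
  · intro hsub
    have hy : y ∈ M.E.filter (fun z => M.procLe z y) := by
      simp only [Finset.mem_filter]; exact ⟨(procLt_mem h).2, ReflTransGen.refl⟩
    have := hsub hy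
    simp only [Finset.mem_filter] at this
    exact procLt_irrefl (h.trans_right this.2)

lemma exists_proc_min {M : MSC P Lab} {T : Finset ℕ} (hne : T.Nonempty)
    (hE : ∀ x ∈ T, x ∈ M.E) {p : P} (hloc : ∀ x ∈ T, M.loc x = p) :
    ∃ m ∈ T, ∀ x ∈ T, M.procLe m x := by
  obtain ⟨m, hm, hmin⟩ := T.exists_min_image (rank M) hne
  refine ⟨m, hm, fun x hx => ?_⟩
  rcases M.proc_total m x (hE m hm) (hE x hx) (by rw [hloc m hm, hloc x hx]) with h | h | h
  · exact h ▸ ReflTransGen.refl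
  · exact h.to_reflTransGen
  · exact absurd (rank_lt_rank h) (not_lt.mpr (hmin x hx))

lemma exists_proc_max {M : MSC P Lab} {T : Finset ℕ} (hne : T.Nonempty)
    (hE : ∀ x ∈ T, x ∈ M.E) {p : P} (hloc : ∀ x ∈ T, M.loc x = p) :
    ∃ m ∈ T, ∀ x ∈ T, M.procLe x m := by
  obtain ⟨m, hm, hmax⟩ := T.exists_max_image (rank M) hne
  refine ⟨m, hm, fun x hx => ?_⟩
  rcases M.proc_total m x (hE m hm) (hE x hx) (by rw [hloc m hm, hloc x hx]) with h | h | h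
  · exact h ▸ ReflTransGen.refl
  · exact absurd (rank_lt_rank h) (not_lt.mpr (hmax x hx))
  · exact h.to_reflTransGen

/-- the (k+1)-st element of a finite set of events on one process -/
lemma exists_kth (M : MSC P Lab) (p : P) :
    ∀ (k : ℕ) (T : Finset ℕ), k < T.card → (∀ x ∈ T, x ∈ M.E) →
    (∀ x ∈ T, M.loc x = p) →
    ∃ t ∈ T, (T.filter (fun y => M.procLe y t)).card = k + 1 := by
  classical
  intro k
  induction k with
  | zero =>
    intro T hcard hE hloc
    obtain ⟨m, hm, hmin⟩ := exists_proc_min (Finset.card_pos.mp (Nat.lt_of_le_of_lt (Nat.zero_le _) hcard)) hE hloc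
    refine ⟨m, hm, ?_⟩
    have : T.filter (fun y => M.procLe y m) = {m} := by
      ext y
      simp only [Finset.mem_filter, Finset.mem_singleton]
      constructor
      · rintro ⟨hy, hle⟩
        exact procLe_antisymm hle (hmin y hy)
      · rintro rfl; exact ⟨hm, ReflTransGen.refl⟩
    rw [this, Finset.card_singleton]
  | succ k ih =>
    intro T hcard hE hloc
    obtain ⟨m, hm, hmin⟩ := exists_proc_min (Finset.card_pos.mp (Nat.lt_of_le_of_lt (Nat.zero_le _) hcard)) hE hloc
    have hcard' : k < (T.erase m).card := by
      rw [Finset.card_erase_of_mem hm]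
      omega
    obtain ⟨t, ht, hcnt⟩ := ih (T.erase m) hcard'
      (fun x hx => hE x (Finset.mem_of_mem_erase hx))
      (fun x hx => hloc x (Finset.mem_of_mem_erase hx))
    refine ⟨t, Finset.mem_of_mem_erase ht, ?_⟩
    have hkey : T.filter (fun y => M.procLe y t) =
        insert m ((T.erase m).filter (fun y => M.procLe y t)) := by
      ext y
      simp only [Finset.mem_filter, Finset.mem_insert, Finset.mem_erase]
      constructor
      · rintro ⟨hy, hle⟩
        by_cases hym : y = m
        · exact Or.inl hym
        · exact Or.inr ⟨⟨hym, hy⟩, hle⟩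
      · rintro (rfl | ⟨⟨_, hy⟩, hle⟩)
        · exact ⟨hm, hmin t (Finset.mem_of_mem_erase ht)⟩
        · exact ⟨hy, hle⟩
    rw [hkey, Finset.card_insert_of_notMem (by simp), hcnt]

end Aux2
section Aux3
open Relation
variable {P Lab : Type}

lemma revB_r {M : MSC P Lab} {B : ℕ} {r : ℕ → ℕ → Prop} (hr : IsBBoundedLin M r B)
    {f g : ℕ} (h : revB M B f g) : r f g := by
  classical
  obtain ⟨⟨hrefl, hanti, htrans, htot, hhb⟩, hbound⟩ := hr
  obtain ⟨e, hef, hsend, helt, hcnt⟩ := h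
  obtain ⟨hlg, h0, hmsg0, hloch0⟩ := hsend
  have he : e ∈ M.E := (M.msg_mem _ _ hef).1
  have hf : f ∈ M.E := (M.msg_mem _ _ hef).2
  have hg : g ∈ M.E := (M.msg_mem _ _ hmsg0).1
  have hpq : M.loc e ≠ M.loc f := M.msg_loc _ _ hef
  have hgf : g ≠ f := fun hq => hpq (by rw [← hq, hlg])
  by_contra hnr
  have hbd := hbound g hg (M.loc e) (M.loc f) hpq
  set K : Set ℕ := {g' | isSendOn M (M.loc e) (M.loc f) g' ∧ M.procLt e g' ∧ M.procLe g' g}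
    with hK
  have hKfin : K.Finite := by
    apply Set.Finite.subset M.E.finite_toSet
    rintro g' ⟨⟨_, h', hmsg', _⟩, _, _⟩
    exact (M.msg_mem _ _ hmsg').1
  classical
  set recv : ℕ → ℕ := fun g' => if h : ∃ h', M.msg g' h' then Classical.choose h else 0
    with hrecvdef
  have hrecv_spec : ∀ g', (∃ h', M.msg g' h') → M.msg g' (recv g') := by
    intro g' h
    simp only [hrecvdef, dif_pos h]
    exact Classical.choose_spec h
  set pend : Set (ℕ × ℕ) := {ef | M.msg ef.1 ef.2 ∧ M.loc ef.1 = M.loc e ∧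
      M.loc ef.2 = M.loc f ∧ r ef.1 g ∧ ¬ r ef.2 g} with hpend
  have hpendfin : pend.Finite := by
    apply Set.Finite.subset (M.E.finite_toSet.prod M.E.finite_toSet)
    rintro ⟨a, b⟩ ⟨hab, _⟩
    exact ⟨(M.msg_mem _ _ hab).1, (M.msg_mem _ _ hab).2⟩
  have hsub : insert (e, f) ((fun g' => (g', recv g')) '' K) ⊆ pend := by
    rintro x (rfl | ⟨g', hg', rfl⟩)
    · refine ⟨hef, rfl, rfl, hhb e he g hg ?_, hnr⟩
      exact ReflTransGen.mono (fun _ _ h => Or.inl h) _ _ helt.to_reflTransGen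
    · obtain ⟨⟨hlg', h', hmsg', hloch'⟩, hlt', hle'⟩ := hg'
      have hgE : g' ∈ M.E := (M.msg_mem _ _ hmsg').1
      have hmsgr : M.msg g' (recv g') := hrecv_spec g' ⟨h', hmsg'⟩
      have hre : recv g' = h' := (M.msg_once _ _ _ _ hmsgr hmsg' (Or.inl rfl)).2
      have hrE : recv g' ∈ M.E := (M.msg_mem _ _ hmsgr).2
      refine ⟨hmsgr, hlg', by show M.loc (recv g') = M.loc f; rw [hre]; exact hloch', ?_, ?_⟩
      · exact hhb g' hgE g hg (ReflTransGen.mono (fun _ _ h => Or.inl h) _ _ hle')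
      · intro hrg
        have hff : M.procLe f (recv g') :=
          (M.fifo e f g' (recv g') hef hmsgr hlg'.symm (by rw [hre]; exact hloch'.symm)).mp
            hlt'.to_reflTransGen
        have : r f g := htrans f hf (recv g') hrE g hg
          (hhb f hf (recv g') hrE (ReflTransGen.mono (fun _ _ h => Or.inl h) _ _ hff)) hrg
        exact hnr this
  have hinj : Function.Injective (fun g' => (g', recv g')) := by
    intro a b h
    exact congrArg Prod.fst h
  have hnotmem : (e, f) ∉ (fun g' => (g', recv g')) '' K := by
    rintro ⟨g', ⟨_, hlt', _⟩, hq⟩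
    have : g' = e := congrArg Prod.fst hq
    exact procLt_irrefl (this ▸ hlt')
  have hcard : (insert (e, f) ((fun g' => (g', recv g')) '' K)).ncard = B + 1 := by
    rw [Set.ncard_insert_of_notMem hnotmem (hKfin.image _),
      Set.ncard_image_of_injective _ hinj, hcnt]
  have := Set.ncard_le_ncard hsub hpendfin
  omega

lemma leB_r {M : MSC P Lab} {B : ℕ} {r : ℕ → ℕ → Prop} (hr : IsBBoundedLin M r B)
    {e f : ℕ} (h : leB M B e f) : e = f ∨ (r e f ∧ e ∈ M.E ∧ f ∈ M.E) := by
  obtain ⟨⟨hrefl, hanti, htrans, htot, hhb⟩, hbound⟩ := hr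
  induction h with
  | refl => exact Or.inl rfl
  | @tail b c hab hbc ih =>
    have hbE : b ∈ M.E := (step_mem M B hbc).1
    have hcE : c ∈ M.E := (step_mem M B hbc).2
    have hrbc : r b c := by
      rcases hbc with hbc | hbc
      · exact hhb b hbE c hcE (ReflTransGen.single hbc)
      · exact revB_r ⟨⟨hrefl, hanti, htrans, htot, hhb⟩, hbound⟩ hbc
    rcases ih with rfl | ⟨hreb, heE, _⟩
    · exact Or.inr ⟨hrbc, hbE, hcE⟩
    · exact Or.inr ⟨htrans e heE b hbE c hcE hreb hrbc, heE, hcE⟩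

lemma leB_antisymm {M : MSC P Lab} {B : ℕ} (hM : ExistsBBounded M B)
    {e f : ℕ} (h : leB M B e f) (h' : leB M B f e) : e = f := by
  obtain ⟨r, hr⟩ := hM
  rcases leB_r hr h with rfl | ⟨h1, he, hf⟩
  · rfl
  rcases leB_r hr h' with rfl | ⟨h2, _, _⟩
  · rfl
  exact hr.1.2.1 e he f hf h1 h2

lemma ltB_of_leB_ne {M : MSC P Lab} {B : ℕ} (hM : ExistsBBounded M B)
    {e f : ℕ} (h : leB M B e f) (hne : e ≠ f) : ltB M B e f :=
  ⟨h, fun h' => hne (leB_antisymm hM h h')⟩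

end Aux3
section Aux4
open Relation
set_option linter.unusedSectionVars false
variable {P Lab : Type} [Fintype P] [LinearOrder P] {M : MSC P Lab} {B : ℕ}

lemma upB_mem {e x : ℕ} (he : e ∈ M.E) (hx : x ∈ upB M B e) : x ∈ M.E :=
  (leB_mem_right hx).elim (fun h => h ▸ he) id

lemma upB_self (e : ℕ) : e ∈ upB M B e := ReflTransGen.refl

lemma upB_mono {e f : ℕ} (h : leB M B e f) : upB M B f ⊆ upB M B e :=
  fun _ hx => h.trans hx

lemma D_disjoint {e f : ℕ} (he : e ∈ M.E) (hf : f ∈ M.E) {p : P}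
    (h1 : p ∈ M.loc '' (upB M B e \ upB M B f)) :
    p ∉ M.loc '' (upB M B f \ upB M B e) := by
  obtain ⟨x, ⟨hxe, hxf⟩, rfl⟩ := h1
  rintro ⟨y, ⟨hye, hyf⟩, hxy⟩
  have hxE : x ∈ M.E := upB_mem he hxe
  have hyE : y ∈ M.E := upB_mem hf hye
  rcases leB_comparable (B := B) hxE hyE hxy.symm with h | h
  · exact hyf (hxe.trans h)
  · exact hxf (hye.trans h)

lemma exists_P_min {S : Set P} (h : S.Nonempty) : ∃ p ∈ S, ∀ q ∈ S, p ≤ q :=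
  Set.exists_min_image S id (Set.toFinite S) h

lemma precB_irrefl {e : ℕ} (h : precB M B e e) : False := by
  rcases h with h | ⟨h, _⟩
  · exact h.2 h.1
  · exact h.1 ReflTransGen.refl

lemma precB_asymm {e f : ℕ} (h : precB M B e f) (h' : precB M B f e) : False := by
  rcases h with h | ⟨hp, p, hp1, hp2⟩
  · rcases h' with h' | ⟨hp', _⟩
    · exact h.2 h'.1
    · exact hp'.2 h.1
  · rcases h' with h' | ⟨hp', p', hp1', hp2'⟩
    · exact hp.2 h'.1
    · exact lt_asymm (hp2 p' hp1') (hp2' p hp1)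

lemma precB_total (hM : ExistsBBounded M B) {e f : ℕ} (he : e ∈ M.E) (hf : f ∈ M.E)
    (hne : e ≠ f) : precB M B e f ∨ precB M B f e := by
  by_cases hef : leB M B e f
  · exact Or.inl (Or.inl (ltB_of_leB_ne hM hef hne))
  by_cases hfe : leB M B f e
  · exact Or.inr (Or.inl (ltB_of_leB_ne hM hfe hne.symm))
  have h1 : M.loc e ∈ M.loc '' (upB M B e \ upB M B f) :=
    ⟨e, ⟨upB_self e, fun h => hfe h⟩, rfl⟩
  obtain ⟨r0, hr0, hr0min⟩ := exists_P_min (S := (M.loc '' (upB M B e \ upB M B f)) ∪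
    (M.loc '' (upB M B f \ upB M B e))) ⟨M.loc e, Or.inl h1⟩
  rcases hr0 with hr0 | hr0
  · refine Or.inl (Or.inr ⟨⟨hef, hfe⟩, r0, hr0, fun q hq => ?_⟩)
    exact lt_of_le_of_ne (hr0min q (Or.inr hq)) (fun h => D_disjoint he hf hr0 (h ▸ hq))
  · refine Or.inr (Or.inr ⟨⟨hfe, hef⟩, r0, hr0, fun q hq => ?_⟩)
    exact lt_of_le_of_ne (hr0min q (Or.inl hq)) (fun h => D_disjoint hf he hr0 (h ▸ hq))

lemma precB_trans (hM : ExistsBBounded M B) {e f g : ℕ} (he : e ∈ M.E) (hf : f ∈ M.E)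
    (hg : g ∈ M.E) (hef : precB M B e f) (hfg : precB M B f g) : precB M B e g := by
  rcases hef with hlt | ⟨hpar, p, hp, hpall⟩
  · rcases hfg with hlt' | ⟨hpar', p', hp', hpall'⟩
    · exact Or.inl ⟨hlt.1.trans hlt'.1, fun h => hlt'.2 (h.trans hlt.1)⟩
    · -- lt e f, par f g
      by_cases heg : leB M B e g
      · exact Or.inl ⟨heg, fun h => hpar'.2 (h.trans hlt.1)⟩
      by_cases hge : leB M B g e
      · exact absurd (hge.trans hlt.1) hpar'.2
      refine Or.inr ⟨⟨heg, hge⟩, p', ?_, ?_⟩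
      · obtain ⟨x, ⟨hxf, hxg⟩, rfl⟩ := hp'
        exact ⟨x, ⟨upB_mono hlt.1 hxf, hxg⟩, rfl⟩
      · intro q hq
        obtain ⟨y, ⟨hyg, hye⟩, rfl⟩ := hq
        exact hpall' _ ⟨y, ⟨hyg, fun h => hye (upB_mono hlt.1 h)⟩, rfl⟩
  · rcases hfg with hlt' | ⟨hpar', p', hp', hpall'⟩
    · -- par e f, lt f g
      by_cases heg : leB M B e g
      · exact Or.inl ⟨heg, fun h => hpar.2 (hlt'.1.trans h)⟩
      by_cases hge : leB M B g e
      · exact absurd (hlt'.1.trans hge) hpar.2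
      refine Or.inr ⟨⟨heg, hge⟩, p, ?_, ?_⟩
      · obtain ⟨x, ⟨hxe, hxf⟩, rfl⟩ := hp
        exact ⟨x, ⟨hxe, fun h => hxf (upB_mono hlt'.1 h)⟩, rfl⟩
      · intro q hq
        obtain ⟨y, ⟨hyg, hye⟩, rfl⟩ := hq
        exact hpall _ ⟨y, ⟨upB_mono hlt'.1 hyg, hye⟩, rfl⟩
    · -- par e f, par f g
      by_cases hge : leB M B g e
      · by_cases heg : leB M B e g
        · -- e = g, contradiction
          have hEq : e = g := leB_antisymm hM heg hge
          subst hEq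
          obtain ⟨x0, hx0, rfl⟩ := hp
          obtain ⟨y0, hy0, rfl⟩ := hp'
          have h1 : M.loc x0 < M.loc y0 := hpall _ ⟨y0, hy0, rfl⟩
          have h2 : M.loc y0 < M.loc x0 := hpall' _ ⟨x0, hx0, rfl⟩
          exact absurd (h1.trans h2) (lt_irrefl _)
        · -- g <_B e : contradiction via inclusions
          exfalso
          obtain ⟨x0, ⟨hxe, hxf⟩, rfl⟩ := hp
          obtain ⟨y0, ⟨hyf, hyg⟩, rfl⟩ := hp'
          have h1 : M.loc y0 < M.loc x0 :=
            hpall' _ ⟨x0, ⟨upB_mono hge hxe, hxf⟩, rfl⟩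
          have h2 : M.loc x0 < M.loc y0 :=
            hpall _ ⟨y0, ⟨hyf, fun h => hyg (upB_mono hge h)⟩, rfl⟩
          exact absurd (h1.trans h2) (lt_irrefl _)
      · by_cases heg : leB M B e g
        · exact Or.inl ⟨heg, hge⟩
        -- the minimum argument
        set Def := M.loc '' (upB M B e \ upB M B f) with hDef
        set Dfe := M.loc '' (upB M B f \ upB M B e) with hDfe
        set Dfg := M.loc '' (upB M B f \ upB M B g) with hDfg
        set Dgf := M.loc '' (upB M B g \ upB M B f) with hDgf
        set Deg := M.loc '' (upB M B e \ upB M B g) with hDeg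
        set Dge := M.loc '' (upB M B g \ upB M B e) with hDge
        set U : Set P := Def ∪ Dfe ∪ Dfg ∪ Dgf ∪ Deg ∪ Dge with hU
        obtain ⟨r0, hr0U, hr0min⟩ := exists_P_min (S := U)
          ⟨p, by left; left; left; left; left; exact hp⟩
        have hr1 : r0 ∉ Dfe := fun h =>
          absurd (hr0min p (by left; left; left; left; left; exact hp)) (not_le.mpr (hpall r0 h))
        have hr2 : r0 ∉ Dgf := fun h =>
          absurd (hr0min p' (by left; left; left; right; exact hp')) (not_le.mpr (hpall' r0 h))
        have hkey : r0 ∈ Deg := by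
          rcases hr0U with ((((h | h) | h) | h) | h) | h
          · obtain ⟨x, ⟨hxe, hxf⟩, rfl⟩ := h
            by_cases hxg : x ∈ upB M B g
            · exact absurd ⟨x, ⟨hxg, hxf⟩, rfl⟩ hr2
            · exact ⟨x, ⟨hxe, hxg⟩, rfl⟩
          · exact absurd h hr1
          · obtain ⟨x, ⟨hxf, hxg⟩, rfl⟩ := h
            by_cases hxe : x ∈ upB M B e
            · exact ⟨x, ⟨hxe, hxg⟩, rfl⟩
            · exact absurd ⟨x, ⟨hxf, hxe⟩, rfl⟩ hr1
          · exact absurd h hr2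
          · exact h
          · obtain ⟨x, ⟨hxg, hxe⟩, rfl⟩ := h
            by_cases hxf : x ∈ upB M B f
            · exact absurd ⟨x, ⟨hxf, hxe⟩, rfl⟩ hr1
            · exact absurd ⟨x, ⟨hxg, hxf⟩, rfl⟩ hr2
        refine Or.inr ⟨⟨heg, hge⟩, r0, hkey, fun q hq => ?_⟩
        refine lt_of_le_of_ne (hr0min q (by right; exact hq)) ?_
        exact fun h => D_disjoint he hg hkey (h ▸ hq)

end Aux4

/-- For an `∃B`-bounded MSC `M`, the reflexive closure `⪯_B`
of `≺_B` contains `≤_B` (in particular the happened-before relation `≤`), and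
it is a `B`-bounded linearization of `M`. -/
theorem precB_refl_closure_bounded_linearization {P Lab : Type}
    [Fintype P] [Nonempty P] [LinearOrder P] [Fintype Lab] [Nonempty Lab]
    (B : ℕ) (M : MSC P Lab) (hM : ExistsBBounded M B) :
    (∀ e ∈ M.E, ∀ f ∈ M.E, leB M B e f → (e = f ∨ precB M B e f)) ∧
    (∀ e ∈ M.E, ∀ f ∈ M.E, M.hb e f → (e = f ∨ precB M B e f)) ∧
    IsBBoundedLin M (fun e f => e = f ∨ precB M B e f) B := by
  classical
  have part1 : ∀ e f : ℕ, leB M B e f → e = f ∨ precB M B e f := by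
    intro e f h
    by_cases hef : e = f
    · exact Or.inl hef
    · exact Or.inr (Or.inl (ltB_of_leB_ne hM h hef))
  refine ⟨fun e _ f _ h => part1 e f h, fun e _ f _ h => part1 e f (hb_leB h),
    ⟨fun e _ => Or.inl rfl, ?_, ?_, ?_, fun e he f hf h => part1 e f (hb_leB h)⟩, ?_⟩
  · -- antisymmetry
    intro e he f hf h h'
    rcases h with rfl | h
    · rfl
    rcases h' with rfl | h'
    · rfl
    exact absurd h' (fun h'' => precB_asymm h h'')
  · -- transitivity
    intro e he f hf g hg h h'
    rcases h with rfl | h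
    · exact h'
    rcases h' with rfl | h'
    · exact Or.inr h
    · exact Or.inr (precB_trans hM he hf hg h h')
  · -- totality
    intro e he f hf
    by_cases hef : e = f
    · exact Or.inl (Or.inl hef)
    · exact (precB_total hM he hf hef).imp Or.inr Or.inr
  · -- B-boundedness
    intro g0 hg0 p q hpq
    set S : Set (ℕ × ℕ) := {ef | M.msg ef.1 ef.2 ∧ M.loc ef.1 = p ∧ M.loc ef.2 = q ∧
      (ef.1 = g0 ∨ precB M B ef.1 g0) ∧ ¬ (ef.2 = g0 ∨ precB M B ef.2 g0)} with hS
    show S.ncard ≤ B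
    by_contra hcon
    push_neg at hcon
    have hSfin : S.Finite := by
      apply Set.Finite.subset (M.E.finite_toSet.prod M.E.finite_toSet)
      rintro ⟨a, b⟩ ⟨hab, _⟩
      exact ⟨(M.msg_mem _ _ hab).1, (M.msg_mem _ _ hab).2⟩
    have hSne : S.Nonempty := Set.nonempty_of_ncard_ne_zero (by omega)
    rcases Nat.eq_zero_or_pos B with rfl | hB
    · -- B = 0
      obtain ⟨⟨e1, f1⟩, hmsg1, hl1, hl2, _, _⟩ := hSne
      obtain ⟨r, ⟨hrefl, hranti, hrtrans, hrtot, hrhb⟩, hrbound⟩ := hM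
      have he1 : e1 ∈ M.E := (M.msg_mem _ _ hmsg1).1
      have hf1 : f1 ∈ M.E := (M.msg_mem _ _ hmsg1).2
      have hbd := hrbound e1 he1 p q hpq
      have hmem : (e1, f1) ∈ {ef : ℕ × ℕ | M.msg ef.1 ef.2 ∧ M.loc ef.1 = p ∧
          M.loc ef.2 = q ∧ r ef.1 e1 ∧ ¬ r ef.2 e1} := by
        refine ⟨hmsg1, hl1, hl2, hrefl e1 he1, fun h => ?_⟩
        have hr1 : r e1 f1 := hrhb e1 he1 f1 hf1 (Relation.ReflTransGen.single (Or.inr hmsg1))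
        have heq : e1 = f1 := hranti e1 he1 f1 hf1 hr1 h
        exact hpq (by rw [← hl1, ← hl2, heq])
      have hfin : ({ef : ℕ × ℕ | M.msg ef.1 ef.2 ∧ M.loc ef.1 = p ∧
          M.loc ef.2 = q ∧ r ef.1 e1 ∧ ¬ r ef.2 e1}).Finite := by
        apply Set.Finite.subset (M.E.finite_toSet.prod M.E.finite_toSet)
        rintro ⟨a, b⟩ ⟨hab, _⟩
        exact ⟨(M.msg_mem _ _ hab).1, (M.msg_mem _ _ hab).2⟩
      have := (Set.ncard_pos hfin).mpr ⟨_, hmem⟩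
      omega
    · -- B ≥ 1
      have hinjS : Set.InjOn Prod.fst S := by
        rintro ⟨a, b⟩ ha ⟨c, d⟩ hc h
        simp only at h
        subst h
        have := M.msg_once a b a d ha.1 hc.1 (Or.inl rfl)
        exact Prod.ext rfl this.2
      have hTfin : (Prod.fst '' S).Finite := hSfin.image _
      set Tf : Finset ℕ := hTfin.toFinset with hTf
      have hTmem : ∀ x, x ∈ Tf ↔ x ∈ Prod.fst '' S := fun x => Set.Finite.mem_toFinset _
      have hTcard : B + 1 ≤ Tf.card := by
        have h1 : (Prod.fst '' S).ncard = S.ncard := Set.ncard_image_of_injOn hinjS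
        have h2 : (Prod.fst '' S).ncard = Tf.card := Set.ncard_eq_toFinset_card _ hTfin
        omega
      have hTS : ∀ x ∈ Tf, ∃ b, (x, b) ∈ S := by
        intro x hx
        obtain ⟨⟨a, b⟩, hab, rfl⟩ := (hTmem x).mp hx
        exact ⟨b, hab⟩
      have hTE : ∀ x ∈ Tf, x ∈ M.E := by
        intro x hx
        obtain ⟨b, hb⟩ := hTS x hx
        exact (M.msg_mem _ _ hb.1).1
      have hTloc : ∀ x ∈ Tf, M.loc x = p := by
        intro x hx
        obtain ⟨b, hb⟩ := hTS x hx
        exact hb.2.1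
      obtain ⟨e1, he1T, hmin⟩ := exists_proc_min (Finset.card_pos.mp (by omega)) hTE hTloc
      obtain ⟨m, hmT, hmax⟩ := exists_proc_max (Finset.card_pos.mp (by omega)) hTE hTloc
      obtain ⟨f1, hf1S⟩ := hTS e1 he1T
      obtain ⟨fm, hfmS⟩ := hTS m hmT
      obtain ⟨hmsg1, hl1, hl2, _, hnf1⟩ := hf1S
      have he1E : e1 ∈ M.E := hTE e1 he1T
      have hf1E : f1 ∈ M.E := (M.msg_mem _ _ hmsg1).2
      have hmE : m ∈ M.E := hTE m hmT
      set Vf : Finset ℕ := M.E.filter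
        (fun x => isSendOn M p q x ∧ M.procLt e1 x ∧ M.procLe x m) with hVf
      have hsubV : Tf.erase e1 ⊆ Vf := by
        intro x hx
        have hxT := Finset.mem_of_mem_erase hx
        have hxne : x ≠ e1 := Finset.ne_of_mem_erase hx
        obtain ⟨fx, hfx⟩ := hTS x hxT
        refine Finset.mem_filter.mpr ⟨hTE x hxT, ⟨hTloc x hxT, fx, hfx.1, hfx.2.2.1⟩,
          procLe_of_ne (hmin x hxT) (Ne.symm hxne), hmax x hxT⟩
      have hVcard : B ≤ Vf.card := by
        have := Finset.card_le_card hsubV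
        rw [Finset.card_erase_of_mem he1T] at this
        omega
      obtain ⟨g1, hg1V, hg1cnt⟩ := exists_kth M p (B - 1) Vf (by omega)
        (fun x hx => (Finset.mem_filter.mp hx).1)
        (fun x hx => (Finset.mem_filter.mp hx).2.1.1)
      obtain ⟨hg1E, hg1send, hg1lt, hg1lem⟩ := Finset.mem_filter.mp hg1V
      have hrev : revB M B f1 g1 := by
        refine ⟨e1, hmsg1, by rw [hl1, hl2]; exact hg1send, hg1lt, ?_⟩
        have hseteq : {g' | isSendOn M (M.loc e1) (M.loc f1) g' ∧ M.procLt e1 g' ∧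
            M.procLe g' g1} = ↑(Vf.filter (fun y => M.procLe y g1)) := by
          ext x
          constructor
          · rintro ⟨hsend, hlt, hle⟩
            rw [hl1, hl2] at hsend
            obtain ⟨xr, hmx, _⟩ := hsend.2
            have hxE : x ∈ M.E := (M.msg_mem _ _ hmx).1
            exact Finset.mem_coe.mpr (Finset.mem_filter.mpr
              ⟨Finset.mem_filter.mpr ⟨hxE, hsend, hlt, hle.trans hg1lem⟩, hle⟩)
          · intro hx
            have hx' := Finset.mem_filter.mp (Finset.mem_coe.mp hx)
            have hx'' := Finset.mem_filter.mp hx'.1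
            exact ⟨by rw [hl1, hl2]; exact hx''.2.1, hx''.2.2.1, hx'.2⟩
        rw [hseteq, Set.ncard_coe_finset, hg1cnt]
        omega
      have h1 : leB M B f1 g1 := Relation.ReflTransGen.single (Or.inr hrev)
      have hlef1m : leB M B f1 m := h1.trans (procLe_leB hg1lem)
      have hnem : f1 ≠ m := by
        intro h
        apply hpq
        rw [← hl2, h, hTloc m hmT]
      have hprec : precB M B f1 m := Or.inl (ltB_of_leB_ne hM hlef1m hnem)
      have hprecg : precB M B f1 g0 := by
        rcases hfmS.2.2.2.1 with rfl | h
        · exact hprec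
        · exact precB_trans hM hf1E hmE hg0 hprec h
      exact hnf1 (Or.inr hprecg)
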